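/- Let β, κ, γ, m > 0 and for ω > 0 let α(ω) = (β/κ)^{1/4}·(ω² − i(γ/β)ω)^{1/4} ∈ ℂ (principal fourth root z^{1/4} = exp((1/4)·Log z)). Define C_{2,ω} = cos(α(ω))/(sinh(α(ω)) + sin(α(ω))) − [(1 + cosh(α(ω))cos(α(ω)) + sinh(α(ω))sin(α(ω)))/(2 + 2·cosh(α(ω))cos(α(ω)))]·[(cosh(α(ω)) + cos(α(ω)))/(sinh(α(ω)) + sin(α(ω)))], Q₁(ω) = 1 − (4κ/m)·(α(ω)³/ω²)·C_{2,ω}, and Q̃₁(ω) = 1 + (2κ/(m·ω²))·α(ω)³·tan(α(ω)). Then |Q₁(ω) − Q̃₁(ω)| → 0 as ω → ∞. -/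

import Mathlib

/-- The characteristic wavenumber `α(ω) = (β/κ)^{1/4}·(ω² − i(γ/β)ω)^{1/4}`, where
`z^{1/4} = exp((1/4)·Log z)` is the principal fourth root. -/
noncomputable def alphaWN (β κ γ ω : ℝ) : ℂ :=
  ((β / κ) ^ ((1:ℝ)/4) : ℝ) *
    Complex.exp ((1/4 : ℂ) * Complex.log ((ω:ℂ) ^ 2 - Complex.I * ((γ:ℂ) / (β:ℂ)) * (ω:ℂ)))

/-- The coefficient `C_{2,ω}` appearing in the closed-form transfer function of the beam. -/
noncomputable def C2coef (β κ γ ω : ℝ) : ℂ :=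
  Complex.cos (alphaWN β κ γ ω) /
      (Complex.sinh (alphaWN β κ γ ω) + Complex.sin (alphaWN β κ γ ω)) -
    ((1 + Complex.cosh (alphaWN β κ γ ω) * Complex.cos (alphaWN β κ γ ω) +
        Complex.sinh (alphaWN β κ γ ω) * Complex.sin (alphaWN β κ γ ω)) /
      (2 + 2 * Complex.cosh (alphaWN β κ γ ω) * Complex.cos (alphaWN β κ γ ω))) *
    ((Complex.cosh (alphaWN β κ γ ω) + Complex.cos (alphaWN β κ γ ω)) /
      (Complex.sinh (alphaWN β κ γ ω) + Complex.sin (alphaWN β κ γ ω)))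

open Real Filter

set_option maxHeartbeats 1000000


lemma le_of_sq_le_sq'' (a b : ℝ) (h : a^2 ≤ b^2) (hb : 0 ≤ b) : a ≤ b := by nlinarith

lemma cos_decomp (x y : ℝ) : Complex.cos ((x:ℂ) + (y:ℂ) * Complex.I) =
    ((Real.cos x * Real.cosh y : ℝ) : ℂ) + ((-(Real.sin x * Real.sinh y) : ℝ) : ℂ) * Complex.I := by
  rw [Complex.cos_add, Complex.cos_mul_I, Complex.sin_mul_I]
  simp only [← Complex.ofReal_cos, ← Complex.ofReal_sin, ← Complex.ofReal_cosh,
    ← Complex.ofReal_sinh, Complex.ofReal_neg, Complex.ofReal_mul]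
  ring

lemma sin_decomp (x y : ℝ) : Complex.sin ((x:ℂ) + (y:ℂ) * Complex.I) =
    ((Real.sin x * Real.cosh y : ℝ) : ℂ) + ((Real.cos x * Real.sinh y : ℝ) : ℂ) * Complex.I := by
  rw [Complex.sin_add, Complex.cos_mul_I, Complex.sin_mul_I]
  simp only [← Complex.ofReal_cos, ← Complex.ofReal_sin, ← Complex.ofReal_cosh,
    ← Complex.ofReal_sinh, Complex.ofReal_mul]
  ring

lemma sinh_decomp (x y : ℝ) : Complex.sinh ((x:ℂ) + (y:ℂ) * Complex.I) =
    ((Real.sinh x * Real.cos y : ℝ) : ℂ) + ((Real.cosh x * Real.sin y : ℝ) : ℂ) * Complex.I := by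
  rw [Complex.sinh_add, Complex.sinh_mul_I, Complex.cosh_mul_I]
  simp only [← Complex.ofReal_cos, ← Complex.ofReal_sin, ← Complex.ofReal_cosh,
    ← Complex.ofReal_sinh, Complex.ofReal_mul]
  ring

lemma cosh_decomp (x y : ℝ) : Complex.cosh ((x:ℂ) + (y:ℂ) * Complex.I) =
    ((Real.cosh x * Real.cos y : ℝ) : ℂ) + ((Real.sinh x * Real.sin y : ℝ) : ℂ) * Complex.I := by
  rw [Complex.cosh_add, Complex.sinh_mul_I, Complex.cosh_mul_I]
  simp only [← Complex.ofReal_cos, ← Complex.ofReal_sin, ← Complex.ofReal_cosh,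
    ← Complex.ofReal_sinh, Complex.ofReal_mul]
  ring

lemma abs_cos_sq' (z : ℂ) :
    (‖Complex.cos z‖)^2 = Real.cos z.re ^ 2 + Real.sinh z.im ^ 2 := by
  conv_lhs => rw [← Complex.re_add_im z, cos_decomp, Complex.sq_norm, Complex.normSq_add_mul_I]
  nlinarith [Real.sin_sq_add_cos_sq z.re, Real.cosh_sq z.im]

lemma abs_sin_sq' (z : ℂ) :
    (‖Complex.sin z‖)^2 = Real.sin z.re ^ 2 + Real.sinh z.im ^ 2 := by
  conv_lhs => rw [← Complex.re_add_im z, sin_decomp, Complex.sq_norm, Complex.normSq_add_mul_I]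
  nlinarith [Real.sin_sq_add_cos_sq z.re, Real.cosh_sq z.im]

lemma abs_sinh_sq' (z : ℂ) :
    (‖Complex.sinh z‖)^2 = Real.sinh z.re ^ 2 + Real.sin z.im ^ 2 := by
  conv_lhs => rw [← Complex.re_add_im z, sinh_decomp, Complex.sq_norm, Complex.normSq_add_mul_I]
  nlinarith [Real.sin_sq_add_cos_sq z.im, Real.cosh_sq z.re]

lemma abs_cosh_sq' (z : ℂ) :
    (‖Complex.cosh z‖)^2 = Real.sinh z.re ^ 2 + Real.cos z.im ^ 2 := by
  conv_lhs => rw [← Complex.re_add_im z, cosh_decomp, Complex.sq_norm, Complex.normSq_add_mul_I]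
  nlinarith [Real.sin_sq_add_cos_sq z.im, Real.cosh_sq z.re]

-- lower bound for |cos z|
lemma abs_cos_lower (z : ℂ) : |Real.sinh z.im| ≤ ‖Complex.cos z‖ := by
  apply le_of_sq_le_sq'' _ _ _ (norm_nonneg _)
  rw [abs_cos_sq', sq_abs]
  nlinarith [sq_nonneg (Real.cos z.re)]

lemma abs_cos_le_three (z : ℂ) (h : |z.im| ≤ 1) : ‖Complex.cos z‖ ≤ 3 := by
  apply le_of_sq_le_sq'' _ _ _ (by norm_num)
  rw [abs_cos_sq']
  have h1 : |Real.sinh z.im| ≤ Real.sinh 1 := by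
    rw [Real.abs_sinh]; exact Real.sinh_le_sinh.mpr h
  have h2 : Real.sinh 1 ≤ 3/2 := by
    rw [Real.sinh_eq]
    have h3 := Real.exp_one_lt_d9
    have h4 := Real.exp_pos (-1:ℝ)
    linarith
  have h5 : |Real.sinh z.im| ≤ 3/2 := le_trans h1 h2
  have h6 : Real.sinh z.im ^ 2 ≤ (3/2)^2 := by
    nlinarith [sq_abs (Real.sinh z.im), abs_nonneg (Real.sinh z.im)]
  nlinarith [Real.cos_sq_le_one z.re]

lemma abs_sin_le_three (z : ℂ) (h : |z.im| ≤ 1) : ‖Complex.sin z‖ ≤ 3 := by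
  apply le_of_sq_le_sq'' _ _ _ (by norm_num)
  rw [abs_sin_sq']
  have h1 : |Real.sinh z.im| ≤ Real.sinh 1 := by
    rw [Real.abs_sinh]; exact Real.sinh_le_sinh.mpr h
  have h2 : Real.sinh 1 ≤ 3/2 := by
    rw [Real.sinh_eq]
    have h3 := Real.exp_one_lt_d9
    have h4 := Real.exp_pos (-1:ℝ)
    linarith
  have h5 : |Real.sinh z.im| ≤ 3/2 := le_trans h1 h2
  have h6 : Real.sinh z.im ^ 2 ≤ (3/2)^2 := by
    nlinarith [sq_abs (Real.sinh z.im), abs_nonneg (Real.sinh z.im)]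
  nlinarith [Real.sin_sq_le_one z.re]

lemma abs_sinh_lower (z : ℂ) : Real.sinh z.re ≤ ‖Complex.sinh z‖ := by
  apply le_of_sq_le_sq'' _ _ _ (norm_nonneg _)
  rw [abs_sinh_sq']
  nlinarith [sq_nonneg (Real.sin z.im)]

lemma abs_sinh_upper (z : ℂ) : ‖Complex.sinh z‖ ≤ Real.cosh z.re := by
  apply le_of_sq_le_sq'' _ _ _ (Real.cosh_pos _).le
  rw [abs_sinh_sq', Real.cosh_sq]
  nlinarith [Real.sin_sq_le_one z.im]

lemma abs_cosh_lower (z : ℂ) : Real.sinh z.re ≤ ‖Complex.cosh z‖ := by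
  apply le_of_sq_le_sq'' _ _ _ (norm_nonneg _)
  rw [abs_cosh_sq']
  nlinarith [sq_nonneg (Real.cos z.im)]

lemma cosh_le_sinh_add_one (x : ℝ) (hx : 0 ≤ x) : Real.cosh x ≤ Real.sinh x + 1 := by
  rw [Real.cosh_eq, Real.sinh_eq]
  have h : Real.exp (-x) ≤ 1 := by
    rw [← Real.exp_zero]
    exact Real.exp_le_exp.mpr (by linarith)
  linarith

lemma sinh_cubic_lb (x : ℝ) (hx : 0 ≤ x) : x^3/54 ≤ Real.sinh x := by
  have h1 : 1 + x/3 ≤ Real.exp (x/3) := by linarith [Real.add_one_le_exp (x/3)]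
  have h2 : (1 + x/3)^3 ≤ Real.exp (x/3)^3 := pow_le_pow_left₀ (by positivity) h1 3
  have h3 : Real.exp (x/3)^3 = Real.exp x := by
    rw [← Real.exp_nat_mul]
    congr 1
    push_cast
    ring
  have h4 : Real.exp (-x) ≤ 1 := by
    rw [← Real.exp_zero]
    exact Real.exp_le_exp.mpr (by linarith)
  have h5 : 1 + (x/3)^3 ≤ (1 + x/3)^3 := by nlinarith [sq_nonneg (x/3), mul_nonneg hx hx]
  rw [Real.sinh_eq]
  rw [h3] at h2
  nlinarith

lemma aux_growthbound (r A q x sh ωv : ℝ) (hr : 0 < r) (hA : 0 < A) (hq : 1 ≤ q)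
    (hq2 : q^2 = ωv) (hx : r/2*q ≤ x) (hqW : 432*A/r^3 ≤ q) (hcub : x^3/54 ≤ sh) :
    A*ωv ≤ sh := by
  have hq0 : 0 < q := lt_of_lt_of_le one_pos hq
  have h1 : (r/2*q)^3 ≤ x^3 := pow_le_pow_left₀ (by positivity) hx 3
  have h2 : (432*A/r^3)*q^2 ≤ q*q^2 := mul_le_mul_of_nonneg_right hqW (by positivity)
  have h4 : A*q^2 ≤ q^3*(r^3/432) := by
    calc A*q^2 = ((432*A/r^3)*q^2)*(r^3/432) := by field_simp
      _ ≤ (q*q^2)*(r^3/432) := mul_le_mul_of_nonneg_right h2 (by positivity)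
      _ = q^3*(r^3/432) := by ring
  have h5 : q^3*(r^3/432) = (r/2*q)^3/54 := by ring
  calc A*ωv = A*q^2 := by rw [hq2]
    _ ≤ (r/2*q)^3/54 := by rw [← h5]; exact h4
    _ ≤ x^3/54 := by linarith
    _ ≤ sh := hcub

lemma aux_main (q d sh ac as aS aSs aD aT : ℝ)
    (hq : 1 ≤ q) (hd : 0 < d)
    (hsh : (6 + 32/d + 300/d^2) * q^2 ≤ sh)
    (hac_l : d/q ≤ ac) (hac_u : ac ≤ 3) (has_u : as ≤ 3)
    (haS_l : sh ≤ aS) (haS_u : aS ≤ sh + 1)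
    (haSs : aS - 3 ≤ aSs) (haD : sh*ac - 1 ≤ aD)
    (has0 : 0 ≤ as) (haS0 : 0 ≤ aS) (haSs0 : 0 ≤ aSs) (haD0 : 0 ≤ aD)
    (haT : aT ≤ ac^2 + aS^2*ac^2 + aS*as^3 + 1) :
    aT ≤ 17 * (ac*(aD*aSs)) ∧ 0 < ac*(aD*aSs) := by
  have hq0 : 0 < q := lt_of_lt_of_le one_pos hq
  have hqsq : 1 ≤ q^2 := by
    have h := mul_le_mul hq hq one_pos.le (by linarith : (0:ℝ) ≤ q)
    calc (1:ℝ) = 1*1 := by ring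
      _ ≤ q*q := h
      _ = q^2 := by ring
  have hd32 : 0 ≤ 32/d := by positivity
  have hd300 : 0 ≤ 300/d^2 := by positivity
  have hA6 : (6:ℝ) ≤ 6 + 32/d + 300/d^2 := by linarith
  have hsh6 : 6 ≤ sh := by
    have h0 : (6:ℝ)*1 ≤ (6+32/d+300/d^2)*q^2 := mul_le_mul hA6 hqsq one_pos.le (by linarith)
    linarith
  have hsh0 : (0:ℝ) ≤ sh := by linarith
  have hac0 : 0 < ac := lt_of_lt_of_le (by positivity) hac_l
  -- 32*q ≤ sh*ac
  have e1 : ((6+32/d+300/d^2)*q^2)*(d/q) = ((6+32/d+300/d^2)*d)*q := by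
    field_simp
  have e2 : (6+32/d+300/d^2)*d = 6*d + 32 + 300/d := by field_simp
  have e2' : (32:ℝ) ≤ (6+32/d+300/d^2)*d := by
    rw [e2]
    have h0 : (0:ℝ) ≤ 300/d := by positivity
    linarith [hd.le]
  have hmm := mul_le_mul hsh hac_l (by positivity) hsh0
  rw [e1] at hmm
  have h3 : 32*q ≤ ((6+32/d+300/d^2)*d)*q := mul_le_mul_of_nonneg_right e2' hq0.le
  have h32q : 32*q ≤ sh*ac := by linarith
  have haD2 : sh*ac/2 ≤ aD := by linarith
  have haSs2 : sh/2 ≤ aSs := by linarith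
  have haS2 : aS ≤ 2*sh := by linarith
  -- 300*sh ≤ ac^2*sh^2
  have e3 : (d/q)^2*((6+32/d+300/d^2)*q^2) = 6*d^2 + 32*d + 300 := by field_simp
  have h4 : (d/q)^2 ≤ ac^2 := pow_le_pow_left₀ (by positivity) hac_l 2
  have h5 : (d/q)^2*((6+32/d+300/d^2)*q^2) ≤ ac^2*sh :=
    mul_le_mul h4 hsh (by positivity) (by positivity)
  rw [e3] at h5
  have h300 : 300 ≤ ac^2*sh := by linarith [sq_nonneg d, hd.le]
  have h300' : 300*sh ≤ ac^2*sh^2 := by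
    have h := mul_le_mul_of_nonneg_right h300 hsh0
    linarith [show (ac^2*sh)*sh = ac^2*sh^2 from by ring]
  -- products
  have hprodpos : 0 < ac*(aD*aSs) := by
    have hshpos : 0 < sh := by linarith
    have h6 : 0 < aD := by linarith [mul_pos hshpos hac0]
    have h7 : 0 < aSs := by linarith
    positivity
  constructor
  · have hprod : ac*((sh*ac/2)*(sh/2)) ≤ ac*(aD*aSs) := by
      apply mul_le_mul_of_nonneg_left _ hac0.le
      exact mul_le_mul haD2 haSs2 (by positivity) haD0
    have hterm1 : aS^2*ac^2 ≤ (2*sh)^2*ac^2 :=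
      mul_le_mul_of_nonneg_right (pow_le_pow_left₀ haS0 haS2 2) (by positivity)
    have hterm2 : aS*as^3 ≤ (2*sh)*27 := by
      have h8 : as^3 ≤ 27 := by
        have := pow_le_pow_left₀ has0 has_u 3
        norm_num at this
        exact this
      exact mul_le_mul haS2 h8 (by positivity) (by linarith)
    have hac9 : ac^2 ≤ 9 := by
      have := pow_le_pow_left₀ hac0.le hac_u 2
      norm_num at this
      exact this
    linarith [hprod, hterm1, hterm2, hac9, h300', hsh6, haT,
      show ac*((sh*ac/2)*(sh/2)) = ac^2*sh^2/4 from by ring,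
      show (2*sh)^2*ac^2 = 4*(ac^2*sh^2) from by ring]
  · exact hprodpos


lemma le_of_sq_le_sq' (a b : ℝ) (h : a^2 ≤ b^2) (hb : 0 ≤ b) : a ≤ b := by nlinarith

lemma aux_sq_bound (a g ω : ℝ) (h : a^2 = (ω^2)^2 + (-(g*ω))^2) (hg : 0 ≤ g) (hgw : g ≤ ω)
    (ha : 0 ≤ a) : a ≤ 2*ω^2 := by
  apply le_of_sq_le_sq' _ _ _ (by positivity)
  rw [h]
  have h1 : g*g ≤ ω*ω := mul_le_mul hgw hgw hg (hg.trans hgw)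
  nlinarith [mul_nonneg (sub_nonneg.mpr h1) (mul_self_nonneg ω)]

lemma aux_cube_bound (u s : ℝ) (hu : 0 < u) (h2 : u ≤ 1/2) (hs : 2*u - (2*u)^3/4 < s) :
    u ≤ s := by
  have h3 : u*u ≤ (1/2)*(1/2) := mul_le_mul h2 h2 hu.le (by norm_num)
  nlinarith [mul_le_mul_of_nonneg_left h3 hu.le]

lemma aux_cos_bd (φ c : ℝ) (h : 1 - (φ/4)^2/2 < c) (h1 : φ ≤ 1) (h0 : 0 < φ) : 1/2 ≤ c := by
  nlinarith [mul_le_mul h1 h1 h0.le zero_le_one]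

lemma aux_sin_bd (φ s : ℝ) (h : φ/4 - (φ/4)^3/4 < s) (h1 : φ ≤ 1) (h0 : 0 < φ) : φ/8 ≤ s := by
  have h3 : φ*φ ≤ 1 := by nlinarith [mul_le_mul h1 h1 h0.le zero_le_one]
  nlinarith [mul_le_mul_of_nonneg_left h3 h0.le]

lemma aux_bound1 (r M c q : ℝ) (hr : 0 < r) (hM : q ≤ M) (hc : 1/2 ≤ c) (hq : 0 ≤ q) :
    r/2*q ≤ r*(M*c) := by
  have h1 : q*(1/2) ≤ M*c := mul_le_mul hM hc (by norm_num) (hq.trans hM)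
  nlinarith [mul_le_mul_of_nonneg_left h1 hr.le]

lemma aux_bound2 (r M s g ω q : ℝ) (hr : 0 < r) (hg : 0 < g) (hω : 0 < ω)
    (hq2 : q*q = ω) (hq : 0 < q) (hM : q ≤ M) (hs : g/(16*ω) ≤ s) (hsn : 0 ≤ s) :
    r*g/16 ≤ r*(M*s)*q := by
  have h1 : q*(g/(16*ω)) ≤ M*s := by
    apply mul_le_mul hM hs (by positivity) (by linarith)
  have h2 : (q*(g/(16*ω)))*q = g/16 := by
    have e : (q*(g/(16*ω)))*q = (q*q)*(g/(16*ω)) := by ring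
    rw [e, hq2]; field_simp
  have h3 := mul_le_mul_of_nonneg_right h1 hq.le
  rw [h2] at h3
  nlinarith [mul_le_mul_of_nonneg_left h3 hr.le]

lemma alpha_est (β κ γ : ℝ) (hβ : 0 < β) (hκ : 0 < κ) (hγ : 0 < γ) :
    ∀ᶠ ω : ℝ in atTop,
      (β/κ)^((1:ℝ)/4) / 2 * Real.sqrt ω ≤ (alphaWN β κ γ ω).re ∧
      (β/κ)^((1:ℝ)/4) * (γ/β) / 16 / Real.sqrt ω ≤ |(alphaWN β κ γ ω).im| ∧
      |(alphaWN β κ γ ω).im| ≤ 1 ∧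
      ‖alphaWN β κ γ ω‖ ≤ 2 * (β/κ)^((1:ℝ)/4) * Real.sqrt ω := by
  filter_upwards [eventually_ge_atTop (1:ℝ), eventually_ge_atTop (2*(γ/β)),
    eventually_ge_atTop (((β/κ)^((1:ℝ)/4)*(γ/β))^2)] with ω hω1 hω2 hω3
  obtain ⟨r, hrdef⟩ : ∃ r, r = (β/κ)^((1:ℝ)/4) := ⟨_, rfl⟩
  obtain ⟨g, hgdef⟩ : ∃ g, g = γ/β := ⟨_, rfl⟩
  rw [← hrdef] at hω3 ⊢
  rw [← hgdef] at hω2 hω3 ⊢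
  have hr : 0 < r := hrdef ▸ Real.rpow_pos_of_pos (div_pos hβ hκ) _
  have hg : 0 < g := hgdef ▸ div_pos hγ hβ
  have hω : (0:ℝ) < ω := lt_of_lt_of_le one_pos hω1
  obtain ⟨z, hzdef⟩ : ∃ z : ℂ, z = (ω:ℂ)^2 - Complex.I*((γ:ℂ)/(β:ℂ))*(ω:ℂ) := ⟨_, rfl⟩
  have hz2 : z = ((ω^2 : ℝ) : ℂ) + ((-(g*ω) : ℝ) : ℂ) * Complex.I := by
    rw [hzdef, hgdef]; push_cast; field_simp; ring
  obtain ⟨A, hAdef⟩ : ∃ A, A = ‖z‖ := ⟨_, rfl⟩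
  have habs_sq : A^2 = (ω^2)^2 + (-(g*ω))^2 := by
    rw [hAdef, hz2, Complex.sq_norm, Complex.normSq_add_mul_I]
  have habs_nonneg : 0 ≤ A := hAdef ▸ norm_nonneg z
  have habs_lb : ω^2 ≤ A := by
    apply le_of_sq_le_sq' _ _ _ habs_nonneg
    rw [habs_sq]
    linarith [sq_nonneg (-(g*ω))]
  have habs_pos : 0 < A := lt_of_lt_of_le (by positivity) habs_lb
  have habs_ub : A ≤ 2*ω^2 := aux_sq_bound A g ω habs_sq hg.le (by linarith) habs_nonneg
  have hw : alphaWN β κ γ ω = (r:ℝ) * Complex.exp ((1/4:ℂ) * Complex.log z) := by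
    rw [alphaWN, hrdef, hzdef]
  obtain ⟨w, hwdef⟩ : ∃ w : ℂ, w = (1/4:ℂ) * Complex.log z := ⟨_, rfl⟩
  rw [← hwdef] at hw
  have h14 : ((1/4 : ℂ)) = (((1/4:ℝ)):ℂ) := by norm_num
  have hwre : w.re = (1/4) * Real.log A := by
    rw [hwdef, h14, Complex.re_ofReal_mul, Complex.log_re, hAdef]
  have hwim : w.im = (1/4) * Complex.arg z := by
    rw [hwdef, h14, Complex.im_ofReal_mul, Complex.log_im]
  obtain ⟨M, hMdef⟩ : ∃ M, M = Real.exp w.re := ⟨_, rfl⟩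
  have hM_pos : 0 < M := hMdef ▸ Real.exp_pos _
  have hare : (alphaWN β κ γ ω).re = r * (M * Real.cos w.im) := by
    rw [hw, Complex.re_ofReal_mul, Complex.exp_re, hMdef]
  have haim : (alphaWN β κ γ ω).im = r * (M * Real.sin w.im) := by
    rw [hw, Complex.im_ofReal_mul, Complex.exp_im, hMdef]
  have haabs : ‖alphaWN β κ γ ω‖ = r * M := by
    rw [hw, norm_mul, Complex.norm_real, Complex.norm_exp, Real.norm_eq_abs, abs_of_pos hr, hMdef]
  -- M bounds
  have hsqnn : 0 ≤ Real.sqrt ω := Real.sqrt_nonneg ω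
  have hsqpos : 0 < Real.sqrt ω := Real.sqrt_pos.mpr hω
  have hsqrt : Real.sqrt ω = Real.exp ((1/2) * Real.log ω) := by
    rw [Real.sqrt_eq_rpow, Real.rpow_def_of_pos hω, mul_comm]
  have hlog_lb : 2 * Real.log ω ≤ Real.log A := by
    have h := Real.log_le_log (by positivity) habs_lb
    rwa [Real.log_pow, Nat.cast_ofNat] at h
  have hM_lb : Real.sqrt ω ≤ M := by
    rw [hsqrt, hMdef, hwre]
    exact Real.exp_le_exp.mpr (by linarith)
  have hM_ub : M ≤ 2 * Real.sqrt ω := by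
    have h1 : Real.log A ≤ Real.log 2 + 2*Real.log ω := by
      have h := Real.log_le_log habs_pos habs_ub
      rwa [Real.log_mul (by norm_num) (by positivity), Real.log_pow, Nat.cast_ofNat] at h
    have h2 : M ≤ Real.exp ((1/4)*Real.log 2 + (1/2)*Real.log ω) := by
      rw [hMdef, hwre]
      exact Real.exp_le_exp.mpr (by linarith)
    have h3 : Real.exp ((1/4)*Real.log 2 + (1/2)*Real.log ω)
        = Real.exp ((1/4)*Real.log 2) * Real.exp ((1/2)*Real.log ω) := Real.exp_add _ _
    have h4 : Real.exp ((1/4)*Real.log 2) ≤ 2 := by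
      have hl2 : (0:ℝ) ≤ Real.log 2 := Real.log_nonneg one_le_two
      calc Real.exp ((1/4)*Real.log 2) ≤ Real.exp (Real.log 2) :=
            Real.exp_le_exp.mpr (by linarith)
        _ = 2 := Real.exp_log two_pos
    rw [h3, ← hsqrt] at h2
    calc M ≤ Real.exp ((1/4)*Real.log 2) * Real.sqrt ω := h2
      _ ≤ 2 * Real.sqrt ω := mul_le_mul_of_nonneg_right h4 hsqnn
  -- arg
  have hzre : z.re = ω^2 := by
    rw [hz2]
    simp only [Complex.add_re, Complex.mul_re, Complex.I_re, Complex.I_im,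
      Complex.ofReal_re, Complex.ofReal_im]
    ring
  have hzim : z.im = -(g*ω) := by
    rw [hz2]
    simp only [Complex.add_im, Complex.mul_im, Complex.I_re, Complex.I_im,
      Complex.ofReal_re, Complex.ofReal_im]
    ring
  have harg : Complex.arg z = -Real.arcsin (g*ω/A) := by
    rw [Complex.arg_of_re_nonneg (by rw [hzre]; positivity), hzim, neg_div, Real.arcsin_neg,
      hAdef]
  obtain ⟨u, hudef⟩ : ∃ u, u = g*ω/A := ⟨_, rfl⟩
  rw [← hudef] at harg
  have hu_pos : 0 < u := hudef ▸ div_pos (by positivity) habs_pos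
  have hu_le : u ≤ g/ω := by
    rw [hudef, div_le_div_iff₀ habs_pos hω]
    calc g*ω*ω = g*(ω^2) := by ring
      _ ≤ g*A := mul_le_mul_of_nonneg_left habs_lb hg.le
  have hu_half : u ≤ 1/2 := by
    refine hu_le.trans ?_
    rw [div_le_iff₀ hω]; linarith
  have hu_lb : g/(2*ω) ≤ u := by
    rw [hudef, div_le_div_iff₀ (by positivity) habs_pos]
    calc g*A ≤ g*(2*ω^2) := mul_le_mul_of_nonneg_left habs_ub hg.le
      _ = g*ω*(2*ω) := by ring
  obtain ⟨φ, hφdef⟩ : ∃ φ, φ = Real.arcsin u := ⟨_, rfl⟩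
  rw [← hφdef] at harg
  have hφ_pos : 0 < φ := hφdef ▸ Real.arcsin_pos.mpr hu_pos
  have hφ_ub : φ ≤ 2*u := by
    have hπ : (1:ℝ) ≤ π/2 := by linarith [Real.pi_gt_three]
    rw [hφdef, Real.arcsin_le_iff_le_sin ⟨by linarith, by linarith⟩
      ⟨by linarith, by linarith⟩]
    exact aux_cube_bound u _ hu_pos hu_half
      (lt_of_le_of_lt (b := 2*u - (2*u)^3/6) (by nlinarith [pow_pos (show (0:ℝ) < 2*u by linarith) 3])
        (Real.sin_gt_sub_cube (by linarith)))
  have hφ1 : φ ≤ 1 := by linarith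
  have hφ_lb : u ≤ φ := by
    have hs := Real.sin_le hφ_pos.le
    rw [hφdef, Real.sin_arcsin (by linarith) (by linarith)] at hs
    rw [hφdef]
    exact hs
  have hwim2 : w.im = -(φ/4) := by rw [hwim, harg]; ring
  have hcos_lb : 1/2 ≤ Real.cos (φ/4) := by
    exact aux_cos_bd φ _ (Real.one_sub_sq_div_two_lt_cos (by positivity)) hφ1 hφ_pos
  have hsin_ub : Real.sin (φ/4) ≤ φ/4 := Real.sin_le (by positivity)
  have hsin_lb : φ/8 ≤ Real.sin (φ/4) := by
    exact aux_sin_bd φ _ (lt_of_le_of_lt (b := φ/4 - (φ/4)^3/6)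
      (by nlinarith [pow_pos (show (0:ℝ) < φ/4 by positivity) 3])
      (Real.sin_gt_sub_cube (by positivity))) hφ1 hφ_pos
  have hsin_nonneg : 0 ≤ Real.sin (φ/4) := by linarith
  have hcosim : Real.cos w.im = Real.cos (φ/4) := by rw [hwim2, Real.cos_neg]
  have hsinim : Real.sin w.im = -Real.sin (φ/4) := by rw [hwim2, Real.sin_neg]
  have hsq : Real.sqrt ω * Real.sqrt ω = ω := Real.mul_self_sqrt hω.le
  have himeq : |(alphaWN β κ γ ω).im| = r * (M * Real.sin (φ/4)) := by
    rw [haim, hsinim]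
    have hnn : 0 ≤ r*(M*Real.sin (φ/4)) :=
      mul_nonneg hr.le (mul_nonneg hM_pos.le hsin_nonneg)
    have he : r*(M*(-Real.sin (φ/4))) = -(r*(M*Real.sin (φ/4))) := by ring
    rw [he, abs_neg, abs_of_nonneg hnn]
  refine ⟨?_, ?_, ?_, ?_⟩
  · rw [hare, hcosim]
    exact aux_bound1 r M _ _ hr hM_lb hcos_lb hsqnn
  · rw [himeq, div_le_iff₀ hsqpos]
    have h1 : g/(16*ω) ≤ Real.sin (φ/4) := by
      have he : g/(16*ω) = (g/(2*ω))/8 := by ring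
      rw [he]; linarith
    exact aux_bound2 r M _ g ω _ hr hg hω hsq hsqpos hM_lb h1 hsin_nonneg
  · rw [himeq]
    have hsval : r*g ≤ Real.sqrt ω := by
      have h := Real.sqrt_le_sqrt hω3
      rwa [Real.sqrt_sq (by positivity)] at h
    have h1 : Real.sin (φ/4) ≤ g/(2*ω) := by
      have he : g/(2*ω) = (g/ω)/2 := by ring
      calc Real.sin (φ/4) ≤ φ/4 := hsin_ub
        _ ≤ u/2 := by linarith
        _ ≤ g/(2*ω) := by rw [he]; linarith
    have h2 : r * (M * Real.sin (φ/4)) ≤ r * ((2*Real.sqrt ω) * (g/(2*ω))) := by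
      apply mul_le_mul_of_nonneg_left _ hr.le
      exact mul_le_mul hM_ub h1 hsin_nonneg (by positivity)
    have h3 : r * ((2*Real.sqrt ω) * (g/(2*ω))) = r*g*Real.sqrt ω/ω := by ring
    rw [h3] at h2
    have h4 : r*g*Real.sqrt ω/ω ≤ 1 := by
      rw [div_le_one hω]
      calc r*g*Real.sqrt ω ≤ Real.sqrt ω * Real.sqrt ω :=
            mul_le_mul_of_nonneg_right hsval hsqnn
        _ = ω := hsq
    linarith
  · rw [haabs]
    calc r * M ≤ r * (2*Real.sqrt ω) := mul_le_mul_of_nonneg_left hM_ub hr.le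
      _ = 2*r*Real.sqrt ω := by ring

lemma aux_32q (A d q sh ac : ℝ) (hd : 0 < d) (hq : 1 ≤ q) (hA32 : 32/d ≤ A)
    (hsh : A*q^2 ≤ sh) (hac : d/q ≤ ac) (hsh0 : 0 ≤ sh) : 32*q ≤ sh*ac := by
  have hq0 : 0 < q := lt_of_lt_of_le one_pos hq
  have h1 : (32/d)*q^2 ≤ A*q^2 := mul_le_mul_of_nonneg_right hA32 (by positivity)
  have h2 := mul_le_mul (le_trans h1 hsh) hac (by positivity) hsh0
  calc 32*q = ((32/d)*q^2)*(d/q) := by field_simp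
    _ ≤ sh*ac := h2

lemma div_le_div_of_nonneg_right' {a b c : ℝ} (h : a ≤ b) (hc : 0 < c) : a/c ≤ b/c :=
  (div_le_div_iff_of_pos_right hc).mpr h


lemma key_identity (kk mm w2 a c s S C : ℂ) (hc : c ≠ 0) (hSs : S + s ≠ 0)
    (h1 : 1 + C*c ≠ 0) (hsc : s^2 + c^2 = 1) (hCS : C^2 - S^2 = 1) :
    (1 - 4*kk/mm*(a^3/w2)*(c/(S+s) - ((1+C*c+S*s)/(2+2*C*c))*((C+c)/(S+s)))) -
      (1 + 2*kk/(mm*w2)*a^3*(s/c)) =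
    (2*kk*a^3/(mm*w2)) * ((c^2 + S^2*c^2 - S*s^3 - 1)/(c*((1+C*c)*(S+s)))) := by
  have h2 : (2:ℂ) + 2*C*c ≠ 0 := by
    rw [show (2:ℂ)+2*C*c = 2*(1+C*c) from by ring]
    exact mul_ne_zero two_ne_zero h1
  have key : 2*c^2*(1+C*c) - c*(1+C*c+S*s)*(C+c) + s*(1+C*c)*(S+s)
      = 1 + S*s^3 - S^2*c^2 - c^2 := by
    linear_combination (1 + C*c - s*S) * hsc - c^2 * hCS
  have hsum : 2*(c/(S+s) - ((1+C*c+S*s)/(2+2*C*c))*((C+c)/(S+s))) + s/c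
      = (1 + S*s^3 - S^2*c^2 - c^2)/(c*((1+C*c)*(S+s))) := by
    rw [← key]
    have h1' : 1 + c*C ≠ 0 := by rwa [mul_comm]
    field_simp
  have hL : (1 - 4*kk/mm*(a^3/w2)*(c/(S+s) - ((1+C*c+S*s)/(2+2*C*c))*((C+c)/(S+s)))) -
      (1 + 2*kk/(mm*w2)*a^3*(s/c)) =
      -(2*kk*a^3/(mm*w2)) *
        (2*(c/(S+s) - ((1+C*c+S*s)/(2+2*C*c))*((C+c)/(S+s))) + s/c) := by
    ring
  rw [hL, hsum]
  rw [show (c^2 + S^2*c^2 - S*s^3 - 1 : ℂ) = -(1 + S*s^3 - S^2*c^2 - c^2) from by ring]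
  ring

/-- `|Q₁(ω) − Q̃₁(ω)| → 0` as `ω → ∞`, where
`Q₁(ω) = 1 − (4κ/m)(α(ω)³/ω²)C_{2,ω}` and
`Q̃₁(ω) = 1 + (2κ/(mω²))α(ω)³ tan(α(ω))`. -/
theorem Q1_asymptotic_form (β κ γ m : ℝ) (hβ : 0 < β) (hκ : 0 < κ) (hγ : 0 < γ)
    (hm : 0 < m) :
    Filter.Tendsto
      (fun ω : ℝ => norm
        ((1 - (4 * (κ:ℂ) / (m:ℂ)) * ((alphaWN β κ γ ω) ^ 3 / (ω:ℂ) ^ 2) * C2coef β κ γ ω) -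
         (1 + (2 * (κ:ℂ) / ((m:ℂ) * (ω:ℂ) ^ 2)) * (alphaWN β κ γ ω) ^ 3 *
            Complex.tan (alphaWN β κ γ ω))))
      Filter.atTop (nhds 0) := by
  have hr : 0 < (β/κ)^((1:ℝ)/4) := Real.rpow_pos_of_pos (div_pos hβ hκ) _
  have hg : 0 < γ/β := div_pos hγ hβ
  refine squeeze_zero' (g := fun ω : ℝ => 272*κ*((β/κ)^((1:ℝ)/4))^3/m / Real.sqrt ω)
    (Eventually.of_forall fun ω => norm_nonneg _) ?_ ?_
  · -- eventual bound
    obtain ⟨r, hrdef⟩ : ∃ r, r = (β/κ)^((1:ℝ)/4) := ⟨_, rfl⟩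
    obtain ⟨g, hgdef⟩ : ∃ g, g = γ/β := ⟨_, rfl⟩
    rw [← hrdef] at hr
    rw [← hgdef] at hg
    obtain ⟨d, hddef⟩ : ∃ d, d = r*g/16 := ⟨_, rfl⟩
    have hd : 0 < d := hddef ▸ by positivity
    obtain ⟨A, hAdef⟩ : ∃ A, A = 6 + 32/d + 300/d^2 := ⟨_, rfl⟩
    have hA : 0 < A := by
      rw [hAdef]; positivity
    have hA6 : 6 ≤ A := by
      rw [hAdef]
      have h1 : 0 ≤ 32/d := by positivity
      have h2 : 0 ≤ 300/d^2 := by positivity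
      linarith
    have hA32 : 32/d ≤ A := by
      rw [hAdef]
      have h1 : (0:ℝ) ≤ 6 := by norm_num
      have h2 : 0 ≤ 300/d^2 := by positivity
      linarith
    filter_upwards [alpha_est β κ γ hβ hκ hγ, eventually_ge_atTop (1:ℝ),
      eventually_ge_atTop ((432*A/r^3)^2)] with ω hEst hω1 hωW
    obtain ⟨hX, hYl, hYu, haA⟩ := hEst
    rw [← hrdef] at hX hYl haA ⊢
    rw [← hgdef] at hYl
    have hω : (0:ℝ) < ω := lt_of_lt_of_le one_pos hω1
    obtain ⟨q, hqdef⟩ : ∃ q, q = Real.sqrt ω := ⟨_, rfl⟩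
    rw [← hqdef] at hX hYl haA ⊢
    have hq0 : 0 < q := hqdef ▸ Real.sqrt_pos.mpr hω
    have hq1 : 1 ≤ q := by
      rw [hqdef, show (1:ℝ) = Real.sqrt 1 from Real.sqrt_one.symm]
      exact Real.sqrt_le_sqrt hω1
    have hq2 : q^2 = ω := hqdef ▸ Real.sq_sqrt hω.le
    obtain ⟨a, hadef⟩ : ∃ a : ℂ, a = alphaWN β κ γ ω := ⟨_, rfl⟩
    rw [← hadef] at hX hYl hYu haA
    have hX0 : 0 ≤ a.re := le_trans (by positivity) hX
    -- growth of sinh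
    have hqW : 432*A/r^3 ≤ q := by
      rw [hqdef]
      have h := Real.sqrt_le_sqrt hωW
      rwa [Real.sqrt_sq (by positivity)] at h
    have hsinhA : A*ω ≤ Real.sinh a.re :=
      aux_growthbound r A q a.re (Real.sinh a.re) ω hr hA hq1 hq2 hX hqW
        (sinh_cubic_lb a.re hX0)
    have hsh : A*q^2 ≤ Real.sinh a.re := by rw [hq2]; exact hsinhA
    have hsh0 : 0 ≤ Real.sinh a.re := Real.sinh_nonneg_iff.mpr hX0
    have hsh6 : 6 ≤ Real.sinh a.re := by
      have h0 : (6:ℝ)*1 ≤ A*ω := mul_le_mul hA6 hω1 one_pos.le hA.le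
      linarith
    -- trig abs bounds
    have hac_l : d/q ≤ ‖Complex.cos a‖ := by
      have h1 : d/q ≤ |a.im| := by rw [hddef]; exact hYl
      have h2 : |a.im| ≤ |Real.sinh a.im| := by
        rw [Real.abs_sinh]
        exact Real.self_le_sinh_iff.mpr (abs_nonneg _)
      exact le_trans (le_trans h1 h2) (abs_cos_lower a)
    have hac_u : ‖Complex.cos a‖ ≤ 3 := abs_cos_le_three a hYu
    have has_u : ‖Complex.sin a‖ ≤ 3 := abs_sin_le_three a hYu
    have haS_l : Real.sinh a.re ≤ ‖Complex.sinh a‖ := abs_sinh_lower a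
    have haS_u : ‖Complex.sinh a‖ ≤ Real.sinh a.re + 1 :=
      (abs_sinh_upper a).trans (cosh_le_sinh_add_one a.re hX0)
    have haC_l : Real.sinh a.re ≤ ‖Complex.cosh a‖ := abs_cosh_lower a
    have haSs : ‖Complex.sinh a‖ - 3
        ≤ ‖Complex.sinh a + Complex.sin a‖ := by
      have h := norm_sub_le (Complex.sinh a + Complex.sin a) (Complex.sin a)
      simp only [add_sub_cancel_right] at h
      linarith
    have haD : Real.sinh a.re * ‖Complex.cos a‖ - 1
        ≤ ‖1 + Complex.cosh a * Complex.cos a‖ := by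
      have h := norm_sub_le (1 + Complex.cosh a * Complex.cos a) 1
      simp only [add_sub_cancel_left, norm_one] at h
      have h2 : Real.sinh a.re * ‖Complex.cos a‖
          ≤ ‖Complex.cosh a * Complex.cos a‖ := by
        rw [norm_mul]
        exact mul_le_mul_of_nonneg_right haC_l (norm_nonneg _)
      linarith
    -- nonvanishing
    have hacpos : 0 < ‖Complex.cos a‖ := lt_of_lt_of_le (by positivity) hac_l
    have hc0 : Complex.cos a ≠ 0 := norm_pos_iff.mp hacpos
    have haSspos : 0 < ‖Complex.sinh a + Complex.sin a‖ := by linarith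
    have hSs0 : Complex.sinh a + Complex.sin a ≠ 0 := norm_pos_iff.mp haSspos
    have h32q : 32*q ≤ Real.sinh a.re * ‖Complex.cos a‖ :=
      aux_32q A d q _ _ hd hq1 hA32 hsh hac_l hsh0
    have haDpos : 0 < ‖1 + Complex.cosh a * Complex.cos a‖ := by linarith
    have h1Cc0 : 1 + Complex.cosh a * Complex.cos a ≠ 0 := norm_pos_iff.mp haDpos
    -- numerator bound
    have haT : ‖(Complex.cos a)^2 + (Complex.sinh a)^2*(Complex.cos a)^2
          - Complex.sinh a*(Complex.sin a)^3 - 1‖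
        ≤ (‖Complex.cos a‖)^2
          + (‖Complex.sinh a‖)^2*(‖Complex.cos a‖)^2
          + ‖Complex.sinh a‖*(‖Complex.sin a‖)^3 + 1 := by
      have h1 := norm_sub_le ((Complex.cos a)^2 + (Complex.sinh a)^2*(Complex.cos a)^2
        - Complex.sinh a*(Complex.sin a)^3) (1:ℂ)
      have h2 := norm_sub_le ((Complex.cos a)^2 + (Complex.sinh a)^2*(Complex.cos a)^2)
        (Complex.sinh a*(Complex.sin a)^3)
      have h3 := norm_add_le ((Complex.cos a)^2) ((Complex.sinh a)^2*(Complex.cos a)^2)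
      simp only [norm_one] at h1 h2 h3
      have e1 : ‖(Complex.cos a)^2‖ = (‖Complex.cos a‖)^2 :=
        norm_pow _ _
      have e2 : ‖(Complex.sinh a)^2*(Complex.cos a)^2‖
          = (‖Complex.sinh a‖)^2*(‖Complex.cos a‖)^2 := by
        rw [norm_mul, norm_pow, norm_pow]
      have e3 : ‖Complex.sinh a*(Complex.sin a)^3‖
          = ‖Complex.sinh a‖*(‖Complex.sin a‖)^3 := by
        rw [norm_mul, norm_pow]
      linarith [h1, h2, h3, e1, e2, e3]
    obtain ⟨hTb, hDpos⟩ := aux_main q d (Real.sinh a.re) (‖Complex.cos a‖)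
      (‖Complex.sin a‖) (‖Complex.sinh a‖)
      (‖Complex.sinh a + Complex.sin a‖)
      (‖1 + Complex.cosh a * Complex.cos a‖)
      (‖(Complex.cos a)^2 + (Complex.sinh a)^2*(Complex.cos a)^2
          - Complex.sinh a*(Complex.sin a)^3 - 1‖)
      hq1 hd (by rw [← hAdef]; exact hsh) hac_l hac_u has_u haS_l haS_u haSs haD
      (norm_nonneg _) (norm_nonneg _) (norm_nonneg _)
      (norm_nonneg _) haT
    -- rewrite goal by identity
    have hEq := key_identity (κ:ℂ) (m:ℂ) ((ω:ℂ)^2) a (Complex.cos a) (Complex.sin a)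
      (Complex.sinh a) (Complex.cosh a) hc0 hSs0 h1Cc0 (Complex.sin_sq_add_cos_sq a)
      (Complex.cosh_sq_sub_sinh_sq a)
    rw [C2coef, Complex.tan_eq_sin_div_cos, ← hadef, hEq]
    -- compute abs
    have hωm : (0:ℝ) < m := hm
    rw [norm_mul]
    have habs1 : ‖2*(κ:ℂ)*a^3/((m:ℂ)*(ω:ℂ)^2)‖
        = 2*κ*(‖a‖)^3/(m*ω^2) := by
      rw [norm_div, norm_mul, norm_mul, norm_mul, norm_pow, norm_pow, Complex.norm_two,
        Complex.norm_real, Complex.norm_real, Complex.norm_real, Real.norm_eq_abs, Real.norm_eq_abs, Real.norm_eq_abs,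
        abs_of_pos hκ, abs_of_pos hm, abs_of_pos hω]
    have habs2 : ‖((Complex.cos a)^2 + (Complex.sinh a)^2*(Complex.cos a)^2
          - Complex.sinh a*(Complex.sin a)^3 - 1) /
          (Complex.cos a*((1 + Complex.cosh a * Complex.cos a)*(Complex.sinh a + Complex.sin a)))‖
        = ‖(Complex.cos a)^2 + (Complex.sinh a)^2*(Complex.cos a)^2
          - Complex.sinh a*(Complex.sin a)^3 - 1‖ /
          (‖Complex.cos a‖*(‖1 + Complex.cosh a * Complex.cos a‖
            *(‖Complex.sinh a + Complex.sin a‖))) := by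
      rw [norm_div, norm_mul, norm_mul]
    rw [habs1, habs2]
    -- final numeric estimate
    have hfrac : ‖(Complex.cos a)^2 + (Complex.sinh a)^2*(Complex.cos a)^2
          - Complex.sinh a*(Complex.sin a)^3 - 1‖ /
          (‖Complex.cos a‖*(‖1 + Complex.cosh a * Complex.cos a‖
            *(‖Complex.sinh a + Complex.sin a‖))) ≤ 17 := by
      rw [div_le_iff₀]
      · calc ‖(Complex.cos a)^2 + (Complex.sinh a)^2*(Complex.cos a)^2
              - Complex.sinh a*(Complex.sin a)^3 - 1‖
            ≤ 17 * (‖Complex.cos a‖*(‖1 + Complex.cosh a * Complex.cos a‖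
              *(‖Complex.sinh a + Complex.sin a‖))) := by
              calc _ ≤ 17 * (‖Complex.cos a‖
                  *(‖1 + Complex.cosh a * Complex.cos a‖
                    *(‖Complex.sinh a + Complex.sin a‖))) := by
                    have e : ‖Complex.cos a‖
                        *(‖1 + Complex.cosh a * Complex.cos a‖
                          *(‖Complex.sinh a + Complex.sin a‖))
                        = ‖Complex.cos a‖
                          *(‖1 + Complex.cosh a * Complex.cos a‖
                            *‖Complex.sinh a + Complex.sin a‖) := by ring
                    rw [e]
                    exact hTb
                _ = _ := by ring
          _ = 17 * (‖Complex.cos a‖*(‖1 + Complex.cosh a * Complex.cos a‖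
              *(‖Complex.sinh a + Complex.sin a‖))) := by ring
      · have e : ‖Complex.cos a‖*(‖1 + Complex.cosh a * Complex.cos a‖
            *(‖Complex.sinh a + Complex.sin a‖))
            = ‖Complex.cos a‖*(‖1 + Complex.cosh a * Complex.cos a‖
              *‖Complex.sinh a + Complex.sin a‖) := by ring
        rw [e]
        exact hDpos
    have hpre : 2*κ*(‖a‖)^3/(m*ω^2) ≤ 16*κ*r^3/(m*q) := by
      have hω2 : ω^2 = q^4 := by rw [← hq2]; ring
      have haA3 : (‖a‖)^3 ≤ (2*r*q)^3 :=
        pow_le_pow_left₀ (norm_nonneg _) haA 3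
      rw [hω2]
      calc 2*κ*(‖a‖)^3/(m*q^4) ≤ 2*κ*(2*r*q)^3/(m*q^4) := by
            apply div_le_div_of_nonneg_right' (mul_le_mul_of_nonneg_left haA3 (by positivity))
              (by positivity)
        _ = 16*κ*r^3/(m*q) := by field_simp; ring
    calc 2*κ*(‖a‖)^3/(m*ω^2) *
          (‖(Complex.cos a)^2 + (Complex.sinh a)^2*(Complex.cos a)^2
            - Complex.sinh a*(Complex.sin a)^3 - 1‖ /
          (‖Complex.cos a‖*(‖1 + Complex.cosh a * Complex.cos a‖
            *(‖Complex.sinh a + Complex.sin a‖))))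
        ≤ 2*κ*(‖a‖)^3/(m*ω^2) * 17 :=
          mul_le_mul_of_nonneg_left hfrac (by positivity)
      _ ≤ (16*κ*r^3/(m*q)) * 17 := mul_le_mul_of_nonneg_right hpre (by norm_num)
      _ = 272*κ*r^3/m/q := by field_simp; ring
  · -- tendsto
    have hsq : Tendsto Real.sqrt atTop atTop := by
      rw [show Real.sqrt = fun x : ℝ => x ^ (1/2:ℝ) from funext fun x => Real.sqrt_eq_rpow x]
      exact tendsto_rpow_atTop (by norm_num)
    have h2 := (hsq.inv_tendsto_atTop).const_mul (272*κ*((β/κ)^((1:ℝ)/4))^3/m)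
    simpa [div_eq_mul_inv] using h2
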